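/- Suppose α ∈ ℝ^ℓ satisfies 0 ≤ α_i ≤ 1 for i ∈ [1,m], 0 ≤ α_i ≤ b for i ∈ [m+1,ℓ], Σ_{i=1}^m α_i − Σ_{i=m+1}^ℓ α_i = ℓν, and Σ_{i=m+1}^ℓ α_i ≥ ℓμ. With m₊ = #{i ∈ [1,m] : α_i = 1}, s₊ = #{i ∈ [1,m] : α_i > 0}, n₊ = #{i ∈ [m+1,ℓ] : α_i = b}, s₋ = #{i ∈ [m+1,ℓ] : α_i > 0}, it holds that m₊/ℓ ≤ ν + b·s₋/ℓ, ν + b·n₊/ℓ ≤ s₊/ℓ, and μ/b ≤ s₋/ℓ. -/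
import Mathlib


open Finset

theorem stmt17
    (l m : ℕ) (hm : 1 ≤ m) (hml : m < l)
    (ν μ b : ℝ) (hν : 0 < ν) (hμ0 : 0 ≤ μ) (hb : 1 ≤ b)
    (α : Fin l → ℝ)
    (hpos : ∀ i : Fin l, (i : ℕ) < m → 0 ≤ α i ∧ α i ≤ 1)
    (hneg : ∀ i : Fin l, m ≤ (i : ℕ) → 0 ≤ α i ∧ α i ≤ b)
    (hsum : (∑ i ∈ univ.filter (fun i : Fin l => (i : ℕ) < m), α i)
          - (∑ i ∈ univ.filter (fun i : Fin l => m ≤ (i : ℕ)), α i) = (l : ℝ) * ν)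
    (hsumneg : (l : ℝ) * μ ≤ ∑ i ∈ univ.filter (fun i : Fin l => m ≤ (i : ℕ)), α i) :
    ((univ.filter (fun i : Fin l => (i : ℕ) < m ∧ α i = 1)).card : ℝ) / (l : ℝ)
      ≤ ν + b * ((univ.filter (fun i : Fin l => m ≤ (i : ℕ) ∧ 0 < α i)).card : ℝ) / (l : ℝ) ∧
    ν + b * ((univ.filter (fun i : Fin l => m ≤ (i : ℕ) ∧ α i = b)).card : ℝ) / (l : ℝ)
      ≤ ((univ.filter (fun i : Fin l => (i : ℕ) < m ∧ 0 < α i)).card : ℝ) / (l : ℝ) ∧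
    μ / b ≤ ((univ.filter (fun i : Fin l => m ≤ (i : ℕ) ∧ 0 < α i)).card : ℝ) / (l : ℝ) := by
  have hl : (0:ℝ) < l := by
    exact_mod_cast Nat.lt_of_le_of_lt (Nat.zero_le m) hml
  have hb0 : (0:ℝ) < b := lt_of_lt_of_le one_pos hb
  set Sp : ℝ := ∑ i ∈ univ.filter (fun i : Fin l => (i : ℕ) < m), α i with hSp
  set Sn : ℝ := ∑ i ∈ univ.filter (fun i : Fin l => m ≤ (i : ℕ)), α i with hSn
  set mp : ℕ := (univ.filter (fun i : Fin l => (i : ℕ) < m ∧ α i = 1)).card with hmp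
  set sp : ℕ := (univ.filter (fun i : Fin l => (i : ℕ) < m ∧ 0 < α i)).card with hsp
  set np : ℕ := (univ.filter (fun i : Fin l => m ≤ (i : ℕ) ∧ α i = b)).card with hnp
  set sn : ℕ := (univ.filter (fun i : Fin l => m ≤ (i : ℕ) ∧ 0 < α i)).card with hsn
  -- Sn ≤ b * sn
  have hSn_le : Sn ≤ b * (sn : ℝ) := by
    have heq : Sn = ∑ i ∈ univ.filter (fun i : Fin l => m ≤ (i : ℕ) ∧ 0 < α i), α i := by
      rw [hSn]
      refine (Finset.sum_subset ?_ ?_).symm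
      · intro i hi; simp only [mem_filter, mem_univ, true_and] at hi ⊢; exact hi.1
      · intro i hi hni
        simp only [mem_filter, mem_univ, true_and] at hi hni
        have h0 := (hneg i hi).1
        by_contra h
        exact hni ⟨hi, lt_of_le_of_ne h0 (Ne.symm h)⟩
    rw [heq]
    calc ∑ i ∈ univ.filter (fun i : Fin l => m ≤ (i : ℕ) ∧ 0 < α i), α i
        ≤ ∑ _i ∈ univ.filter (fun i : Fin l => m ≤ (i : ℕ) ∧ 0 < α i), b := by
          refine Finset.sum_le_sum ?_
          intro i hi
          simp only [mem_filter, mem_univ, true_and] at hi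
          exact (hneg i hi.1).2
      _ = (sn : ℝ) * b := by rw [Finset.sum_const, nsmul_eq_mul]
      _ = b * (sn : ℝ) := mul_comm _ _
  -- b * np ≤ Sn
  have hnp_le : b * (np : ℝ) ≤ Sn := by
    have : (np : ℝ) * b = ∑ i ∈ univ.filter (fun i : Fin l => m ≤ (i : ℕ) ∧ α i = b), α i := by
      rw [Finset.sum_congr rfl (fun i hi => by
        simp only [mem_filter, mem_univ, true_and] at hi; exact hi.2)]
      rw [Finset.sum_const, nsmul_eq_mul]
    rw [mul_comm, this, hSn]
    refine Finset.sum_le_sum_of_subset_of_nonneg ?_ ?_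
    · intro i hi; simp only [mem_filter, mem_univ, true_and] at hi ⊢; exact hi.1
    · intro i hi _
      simp only [mem_filter, mem_univ, true_and] at hi
      exact (hneg i hi).1
  -- mp ≤ Sp
  have hmp_le : (mp : ℝ) ≤ Sp := by
    have : (mp : ℝ) * 1 = ∑ i ∈ univ.filter (fun i : Fin l => (i : ℕ) < m ∧ α i = 1), α i := by
      rw [Finset.sum_congr rfl (fun i hi => by
        simp only [mem_filter, mem_univ, true_and] at hi; exact hi.2)]
      rw [Finset.sum_const, nsmul_eq_mul]
    rw [← mul_one (mp : ℝ), this, hSp]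
    refine Finset.sum_le_sum_of_subset_of_nonneg ?_ ?_
    · intro i hi; simp only [mem_filter, mem_univ, true_and] at hi ⊢; exact hi.1
    · intro i hi _
      simp only [mem_filter, mem_univ, true_and] at hi
      exact (hpos i hi).1
  -- Sp ≤ sp
  have hSp_le : Sp ≤ (sp : ℝ) := by
    have heq : Sp = ∑ i ∈ univ.filter (fun i : Fin l => (i : ℕ) < m ∧ 0 < α i), α i := by
      rw [hSp]
      refine (Finset.sum_subset ?_ ?_).symm
      · intro i hi; simp only [mem_filter, mem_univ, true_and] at hi ⊢; exact hi.1
      · intro i hi hni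
        simp only [mem_filter, mem_univ, true_and] at hi hni
        have h0 := (hpos i hi).1
        by_contra h
        exact hni ⟨hi, lt_of_le_of_ne h0 (Ne.symm h)⟩
    rw [heq]
    calc ∑ i ∈ univ.filter (fun i : Fin l => (i : ℕ) < m ∧ 0 < α i), α i
        ≤ ∑ _i ∈ univ.filter (fun i : Fin l => (i : ℕ) < m ∧ 0 < α i), (1:ℝ) := by
          refine Finset.sum_le_sum ?_
          intro i hi
          simp only [mem_filter, mem_univ, true_and] at hi
          exact (hpos i hi.1).2
      _ = (sp : ℝ) := by rw [Finset.sum_const, nsmul_eq_mul, mul_one]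
  refine ⟨?_, ?_, ?_⟩
  · rw [div_le_iff₀ hl]
    have : (ν + b * (sn : ℝ) / (l : ℝ)) * l = ν * l + b * (sn : ℝ) := by
      field_simp
    rw [this]
    nlinarith [hSn_le, hmp_le, hsum]
  · rw [le_div_iff₀ hl]
    have : (ν + b * (np : ℝ) / (l : ℝ)) * l = ν * l + b * (np : ℝ) := by
      field_simp
    rw [this]
    nlinarith [hnp_le, hSp_le, hsum]
  · rw [div_le_div_iff₀ hb0 hl]
    nlinarith [hSn_le, hsumneg]
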